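/- Suppose X1 = A·Z0 + B·U0 and B has full column rank. Then im [X1; Z0] = im [[A, B], [I_s, 0]] if and only if the stacked data matrix [Z0; U0] ∈ ℝ^{(s+m)×N} has full row rank. -/

import Mathlib

open Matrix

/-- Column space of a matrix: the range of the linear map `x ↦ M x`. -/
def imCol {p q : Type*} [Fintype q] (M : Matrix p q ℝ) : Submodule ℝ (p → ℝ) :=
  LinearMap.range M.mulVecLin

/-- If `X1 = A Z0 + B U0` and `B` has full column rank, then
`im [X1; Z0] = im [[A, B], [I_s, 0]]` iff `[Z0; U0]` has full row rank. -/
theorem stmt4 (n m s N : ℕ)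
    (A : Matrix (Fin n) (Fin s) ℝ) (B : Matrix (Fin n) (Fin m) ℝ)
    (X1 : Matrix (Fin n) (Fin N) ℝ) (Z0 : Matrix (Fin s) (Fin N) ℝ)
    (U0 : Matrix (Fin m) (Fin N) ℝ)
    (hdata : X1 = A * Z0 + B * U0)
    (hB : B.rank = m) :
    imCol (Matrix.fromRows X1 Z0) =
      imCol (Matrix.fromBlocks A B (1 : Matrix (Fin s) (Fin s) ℝ)
        (0 : Matrix (Fin s) (Fin m) ℝ)) ↔
      (Matrix.fromRows Z0 U0).rank = s + m := by
  set F := Matrix.fromBlocks A B (1 : Matrix (Fin s) (Fin s) ℝ)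
    (0 : Matrix (Fin s) (Fin m) ℝ) with hF
  set W := Matrix.fromRows Z0 U0 with hW
  -- B's linear map is injective
  have hBinj : Function.Injective B.mulVecLin := by
    rw [← LinearMap.ker_eq_bot]
    have h1 : Module.finrank ℝ (LinearMap.range B.mulVecLin)
        + Module.finrank ℝ (LinearMap.ker B.mulVecLin)
        = Module.finrank ℝ (Fin m → ℝ) := LinearMap.finrank_range_add_finrank_ker _
    have h2 : Module.finrank ℝ (LinearMap.range B.mulVecLin) = m := hB
    rw [h2, Module.finrank_pi, Fintype.card_fin] at h1
    have : Module.finrank ℝ (LinearMap.ker B.mulVecLin) = 0 := by omega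
    exact Submodule.finrank_eq_zero.mp this
  -- F's linear map is injective
  have hFinj : Function.Injective F.mulVecLin := by
    rw [← LinearMap.ker_eq_bot, Matrix.ker_mulVecLin_eq_bot_iff]
    intro v hv
    have hv' := hv
    rw [hF, Matrix.fromBlocks_mulVec] at hv'
    have h2 : ∀ i, Sum.elim (A *ᵥ (v ∘ Sum.inl) + B *ᵥ (v ∘ Sum.inr))
        ((1 : Matrix (Fin s) (Fin s) ℝ) *ᵥ (v ∘ Sum.inl)
          + (0 : Matrix (Fin s) (Fin m) ℝ) *ᵥ (v ∘ Sum.inr)) i = 0 := by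
      intro i; rw [hv']; rfl
    have hz : v ∘ Sum.inl = 0 := by
      funext i
      have := h2 (Sum.inr i)
      simpa using this
    have hu : B *ᵥ (v ∘ Sum.inr) = 0 := by
      funext i
      have := h2 (Sum.inl i)
      simp only [Sum.elim_inl, Pi.add_apply, hz, Matrix.mulVec_zero, Pi.zero_apply,
        zero_add] at this
      simpa [hz] using this
    have hu' : v ∘ Sum.inr = 0 := by
      have := hBinj (a₁ := v ∘ Sum.inr) (a₂ := 0)
      simp only [Matrix.mulVecLin_apply, Matrix.mulVec_zero] at this
      exact this hu
    funext i
    cases i with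
    | inl i => exact congrFun hz i
    | inr i => exact congrFun hu' i
  -- factorization
  have hfac : Matrix.fromRows X1 Z0 = F * W := by
    rw [hF, hW, Matrix.fromBlocks_mul_fromRows, Matrix.one_mul, Matrix.zero_mul, add_zero,
      ← hdata]
  -- translate imCol of product
  have hmap : imCol (Matrix.fromRows X1 Z0)
      = Submodule.map F.mulVecLin (LinearMap.range W.mulVecLin) := by
    rw [hfac, imCol, Matrix.mulVecLin_mul, LinearMap.range_comp]
  have hFtop : imCol F = Submodule.map F.mulVecLin ⊤ := by
    rw [imCol, Submodule.map_top]
  rw [hmap, hFtop]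
  constructor
  · intro h
    have := Submodule.map_injective_of_injective hFinj h
    rw [Matrix.rank, this, finrank_top, Module.finrank_pi]
    simp
  · intro h
    have htop : LinearMap.range W.mulVecLin = ⊤ := by
      apply Submodule.eq_top_of_finrank_eq
      rw [Module.finrank_pi]
      simpa [Matrix.rank] using h
    rw [htop]
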